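/- For every t > 0 and all x, v ∈ ℝ: ∫_ℝ exp(−i v u) · exp(−(1/4)[coth(t)·(u−x)² + tanh(t)·(u+x)²]) du = √(2π·tanh(2t)) · exp(−(1/2)·tanh(2t)·(x² + v²)) · exp(−i·x·v/cosh(2t)). (This is the Gaussian integral arising from Mehler's formula for the heat kernel of the harmonic oscillator H = −d²/ds² + s², evaluated on the diagonal.) -/

import Mathlib

open MeasureTheory

/-- The Gaussian integral arising from Mehler's formula for the heat kernel of the
harmonic oscillator `H = −d²/ds² + s²`, evaluated on the diagonal: for `t > 0`,
`∫ e^{−ivu} e^{−(1/4)[coth(t)(u−x)² + tanh(t)(u+x)²]} du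
  = √(2π tanh 2t) · e^{−(1/2) tanh(2t)(x²+v²)} · e^{−i x v / cosh 2t}`. -/
theorem stmt_16 (t : ℝ) (ht : 0 < t) (x v : ℝ) :
    ∫ u : ℝ, Complex.exp (-(Complex.I * (v : ℂ) * (u : ℂ))) *
        Complex.exp (-(1 / 4 : ℂ) *
          (((Real.cosh t / Real.sinh t : ℝ) : ℂ) * ((u : ℂ) - (x : ℂ)) ^ 2 +
            ((Real.tanh t : ℝ) : ℂ) * ((u : ℂ) + (x : ℂ)) ^ 2))
      = ((Real.sqrt (2 * Real.pi * Real.tanh (2 * t)) : ℝ) : ℂ) *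
          Complex.exp (-(1 / 2 : ℂ) * ((Real.tanh (2 * t) : ℝ) : ℂ) *
            ((x : ℂ) ^ 2 + (v : ℂ) ^ 2)) *
          Complex.exp (-(Complex.I * (x : ℂ) * (v : ℂ) / ((Real.cosh (2 * t) : ℝ) : ℂ))) := by
  have hs : 0 < Real.sinh t := Real.sinh_pos_iff.2 ht
  have hc : 0 < Real.cosh t := Real.cosh_pos t
  have hS : 0 < Real.sinh (2 * t) := Real.sinh_pos_iff.2 (by linarith)
  have hCh : 0 < Real.cosh (2 * t) := Real.cosh_pos (2*t)
  have hT : 0 < Real.tanh (2 * t) := by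
    rw [Real.tanh_eq_sinh_div_cosh]; positivity
  have hsq : Real.cosh t ^ 2 - Real.sinh t ^ 2 = 1 := Real.cosh_sq_sub_sinh_sq t
  have hS2 : Real.sinh (2 * t) = 2 * Real.sinh t * Real.cosh t := Real.sinh_two_mul t
  have hC2 : Real.cosh (2 * t) = Real.cosh t ^ 2 + Real.sinh t ^ 2 := by
    rw [Real.cosh_two_mul]
  have hTdef : Real.tanh (2 * t) * Real.cosh (2 * t) = Real.sinh (2 * t) := by
    rw [Real.tanh_eq_sinh_div_cosh]; field_simp
  have htt : Real.tanh t = Real.sinh t / Real.cosh t := Real.tanh_eq_sinh_div_cosh t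
  -- key real identities
  have h1 : Real.cosh t / Real.sinh t + Real.tanh t = 2 / Real.tanh (2 * t) := by
    rw [htt, Real.tanh_eq_sinh_div_cosh, hS2, hC2]
    field_simp
  have h2 : Real.cosh t / Real.sinh t - Real.tanh t = 2 / Real.sinh (2 * t) := by
    rw [htt, hS2]
    field_simp
    nlinarith
  set T := Real.tanh (2 * t) with hTd
  set S := Real.sinh (2 * t) with hSd
  set Ch := Real.cosh (2 * t) with hChd
  set b : ℂ := -(1 / (2 * (T : ℂ))) with hb
  set c : ℂ := (x : ℂ) / (S : ℂ) - Complex.I * v with hcc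
  set d : ℂ := -(x : ℂ) ^ 2 / (2 * (T : ℂ)) with hd
  have hTne : (T : ℂ) ≠ 0 := by exact_mod_cast hT.ne'
  have hSne : (S : ℂ) ≠ 0 := by exact_mod_cast hS.ne'
  have hChne : (Ch : ℂ) ≠ 0 := by exact_mod_cast hCh.ne'
  have hbeq : b = ((-(1 / (2 * T)) : ℝ) : ℂ) := by rw [hb]; push_cast; ring
  have hbre : b.re < 0 := by
    rw [hbeq, Complex.ofReal_re]
    exact neg_lt_zero.mpr (by positivity)
  have hpt : ∀ u : ℝ, Complex.exp (-(Complex.I * (v : ℂ) * (u : ℂ))) *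
        Complex.exp (-(1 / 4 : ℂ) *
          (((Real.cosh t / Real.sinh t : ℝ) : ℂ) * ((u : ℂ) - (x : ℂ)) ^ 2 +
            ((Real.tanh t : ℝ) : ℂ) * ((u : ℂ) + (x : ℂ)) ^ 2))
      = Complex.exp (b * (u : ℂ) ^ 2 + c * (u : ℂ) + d) := by
    intro u
    rw [← Complex.exp_add]
    congr 1
    have h1' : ((Real.cosh t / Real.sinh t : ℝ) : ℂ) + ((Real.tanh t : ℝ) : ℂ)
        = 2 / (T : ℂ) := by
      rw [← Complex.ofReal_add, h1]; push_cast; ring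
    have h2' : ((Real.cosh t / Real.sinh t : ℝ) : ℂ) - ((Real.tanh t : ℝ) : ℂ)
        = 2 / (S : ℂ) := by
      rw [← Complex.ofReal_sub, h2]; push_cast; ring
    have e1 : ((Real.cosh t / Real.sinh t : ℝ) : ℂ) = 1 / (T : ℂ) + 1 / (S : ℂ) := by
      have := h1'; have := h2'
      linear_combination (h1' + h2') / 2
    have e2 : ((Real.tanh t : ℝ) : ℂ) = 1 / (T : ℂ) - 1 / (S : ℂ) := by
      linear_combination (h1' - h2') / 2
    rw [e1, e2, hb, hcc, hd]
    field_simp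
    ring
  rw [integral_congr_ae (Filter.Eventually.of_forall hpt),
    integral_cexp_quadratic hbre c d]
  -- now compute the closed form
  have hsqrt : ((Real.pi : ℂ) / -b) ^ (1 / 2 : ℂ)
      = ((Real.sqrt (2 * Real.pi * T) : ℝ) : ℂ) := by
    have hval : (Real.pi : ℂ) / -b = ((2 * Real.pi * T : ℝ) : ℂ) := by
      rw [hb]; push_cast; field_simp
    rw [hval, Real.sqrt_eq_rpow, Complex.ofReal_cpow (by positivity) (1/2 : ℝ)]
    push_cast; ring_nf
  have hTC : (T : ℂ) * (Ch : ℂ) = (S : ℂ) := by exact_mod_cast hTdef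
  have hCS : (Ch : ℂ) ^ 2 - (S : ℂ) ^ 2 = 1 := by
    have : Real.cosh (2*t) ^ 2 - Real.sinh (2*t) ^ 2 = 1 := Real.cosh_sq_sub_sinh_sq (2*t)
    exact_mod_cast this
  have hexp : d - c ^ 2 / (4 * b) =
      -(1 / 2 : ℂ) * (T : ℂ) * ((x : ℂ) ^ 2 + (v : ℂ) ^ 2) +
        -(Complex.I * (x : ℂ) * (v : ℂ) / (Ch : ℂ)) := by
    have hTval : (T : ℂ) = (S : ℂ) / (Ch : ℂ) := by
      rw [← hTC]; field_simp
    rw [hb, hcc, hd, hTval]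
    have hI := Complex.I_sq
    field_simp
    linear_combination (-4*(x:ℂ)^2) * hCS + (4*(S:ℂ)^2*(v:ℂ)^2) * hI
  rw [hsqrt, hexp, Complex.exp_add]
  ring
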